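/- Suppose ∫ π_β (|ℓ| + |log q₀|) dμ < ∞ for all β ∈ [0,1] and L is twice continuously differentiable on [0,1] with L′(η) = ∫ π_η ℓ dμ for all η. Then for all 0 ≤ β < β′ ≤ 1 there exists ξ ∈ [β, β′] such that D_KL(π_β ‖ π_{β′}) = (1/2) (β′ − β)² L″(ξ). In particular, each consecutive KL divergence along an equally spaced annealing schedule with β_k = k/K is (1/(2K²)) L″(ξ_k) for some ξ_k ∈ [(k−1)/K, k/K]. -/

import Mathlib

open MeasureTheory Real Filter Topology

noncomputable section

set_option linter.unusedSectionVars false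
set_option maxHeartbeats 1000000

variable {X : Type*} [MeasurableSpace X]

/-- Geometric annealing path `γ_η = q₀^{1-η} p^η`, set to `0` where `q₀` vanishes. -/
def gammaPath (q0 p : X → ℝ) (η : ℝ) (z : X) : ℝ :=
  if q0 z = 0 then 0 else q0 z ^ (1 - η) * p z ^ η

/-- Normalization constant `Z_η = ∫ γ_η dμ` along the annealing path. -/
def Zpath (μ : Measure X) (q0 p : X → ℝ) (η : ℝ) : ℝ :=
  ∫ z, gammaPath q0 p η z ∂μ

/-- Normalized annealing density `π_η = γ_η / Z_η`. -/
def piPath (μ : Measure X) (q0 p : X → ℝ) (η : ℝ) (z : X) : ℝ :=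
  gammaPath q0 p η z / Zpath μ q0 p η

/-- Kullback–Leibler divergence `D_KL(a‖b) = ∫ a log(a/b) dμ` between densities. -/
def KLdiv (μ : Measure X) (a b : X → ℝ) : ℝ :=
  ∫ z, a z * Real.log (a z / b z) ∂μ


/-- `ℓ = log(p/q₀)`. -/
def ell (q0 p : X → ℝ) (z : X) : ℝ := Real.log (p z / q0 z)

lemma gammaPath_nonneg (q0 p : X → ℝ) (hq0 : ∀ z, 0 ≤ q0 z) (hp : ∀ z, 0 ≤ p z) (η : ℝ)
    (z : X) : 0 ≤ gammaPath q0 p η z := by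
  unfold gammaPath; split
  · exact le_rfl
  · exact mul_nonneg (Real.rpow_nonneg (hq0 z) _) (Real.rpow_nonneg (hp z) _)

lemma gammaPath_zero_apply (q0 p : X → ℝ) (z : X) : gammaPath q0 p 0 z = q0 z := by
  unfold gammaPath; split
  next h => exact h.symm
  next h => simp

lemma gammaPath_measurable {q0 p : X → ℝ} (hq0m : Measurable q0) (hpm : Measurable p)
    (η : ℝ) : Measurable (gammaPath q0 p η) := by
  unfold gammaPath
  exact Measurable.ite (hq0m (measurableSet_singleton 0)) measurable_const
    ((hq0m.pow measurable_const).mul (hpm.pow measurable_const))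

lemma gammaPath_le {q0 p : X → ℝ} (hq0 : ∀ z, 0 ≤ q0 z) (hp : ∀ z, 0 ≤ p z) {η : ℝ}
    (h0 : 0 ≤ η) (h1 : η ≤ 1) (z : X) : gammaPath q0 p η z ≤ q0 z + p z := by
  unfold gammaPath; split
  · exact add_nonneg (hq0 z) (hp z)
  · calc q0 z ^ (1 - η) * p z ^ η ≤ (1 - η) * q0 z + η * p z :=
        Real.geom_mean_le_arith_mean2_weighted (by linarith) h0 (hq0 z) (hp z) (by ring)
    _ ≤ q0 z + p z := by nlinarith [hq0 z, hp z]

/-- a.e. on the support of `q0`, `p` does not vanish (from continuity of `log Z` at `0`). -/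
lemma ae_support_subset (μ : Measure X) [SigmaFinite μ] (q0 p : X → ℝ)
    (hq0m : Measurable q0) (hq0nn : ∀ z, 0 ≤ q0 z) (hq0one : ∫ z, q0 z ∂μ = 1)
    (hpm : Measurable p) (hpnn : ∀ z, 0 ≤ p z)
    (hsupp : ∀ᵐ z ∂μ, 0 < p z → 0 < q0 z)
    (hZ : ∀ η ∈ Set.Icc (0 : ℝ) 1,
      Integrable (gammaPath q0 p η) μ ∧ 0 < Zpath μ q0 p η)
    (hZcont : ContinuousWithinAt (fun t => Real.log (Zpath μ q0 p t)) (Set.Icc 0 1) 0) :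
    ∀ᵐ z ∂μ, q0 z ≠ 0 → p z ≠ 0 := by
  have hq0int : Integrable q0 μ := by
    have := (hZ 0 ⟨le_rfl, zero_le_one⟩).1
    simpa [funext (gammaPath_zero_apply q0 p)] using this
  have hpint : Integrable p μ := by
    refine ((hZ 1 ⟨zero_le_one, le_rfl⟩).1).congr ?_
    filter_upwards [hsupp] with z hz
    unfold gammaPath; split
    next h =>
      have : ¬ 0 < p z := fun hp => absurd (hz hp) (by simp [h])
      simpa using ((hpnn z).antisymm (not_lt.1 this)).symm ▸ rfl
    next h => simp
  have hZ0 : Zpath μ q0 p 0 = 1 := by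
    unfold Zpath
    simp only [gammaPath_zero_apply]
    exact hq0one
  set t : ℕ → ℝ := fun n => ((n : ℝ) + 2)⁻¹ with ht
  have htpos : ∀ n, 0 < t n := fun n => by positivity
  have htle : ∀ n, t n ≤ 1 := fun n => by
    rw [ht]; rw [inv_le_one_iff₀]; right; linarith [Nat.cast_nonneg (α := ℝ) n]
  have ht0 : Tendsto t atTop (𝓝 0) := by
    apply Tendsto.inv_tendsto_atTop
    exact tendsto_atTop_add_const_right atTop 2 tendsto_natCast_atTop_atTop
  have hZtend1 : Tendsto (fun n => Zpath μ q0 p (t n)) atTop (𝓝 1) := by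
    have htmem : Tendsto t atTop (𝓝[Set.Icc (0:ℝ) 1] 0) := by
      rw [tendsto_nhdsWithin_iff]
      exact ⟨ht0, Eventually.of_forall fun n => ⟨(htpos n).le, htle n⟩⟩
    have hlog : Tendsto (fun n => Real.log (Zpath μ q0 p (t n))) atTop (𝓝 0) := by
      have := hZcont.tendsto.comp htmem
      simpa [hZ0, Function.comp_def] using this
    have := (Real.continuous_exp.tendsto 0).comp hlog
    simp only [Real.exp_zero] at this
    refine this.congr fun n => ?_
    exact Real.exp_log ((hZ (t n) ⟨(htpos n).le, htle n⟩).2)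
  set g : X → ℝ := fun z => if p z = 0 then 0 else q0 z with hgdef
  have hgmeas : Measurable g :=
    Measurable.ite (hpm (measurableSet_singleton 0)) measurable_const hq0m
  have hgle : ∀ z, 0 ≤ g z ∧ g z ≤ q0 z := by
    intro z; constructor <;> (rw [hgdef]; dsimp only; split)
    · exact le_rfl
    · exact hq0nn z
    · exact hq0nn z
    · exact le_rfl
  have hgint : Integrable g μ := by
    refine hq0int.mono' hgmeas.aestronglyMeasurable ?_
    refine Eventually.of_forall fun z => ?_
    rw [Real.norm_eq_abs, abs_of_nonneg (hgle z).1]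
    exact (hgle z).2
  have hZtend2 : Tendsto (fun n => Zpath μ q0 p (t n)) atTop (𝓝 (∫ z, g z ∂μ)) := by
    refine tendsto_integral_of_dominated_convergence (fun z => q0 z + p z)
      (fun n => (gammaPath_measurable hq0m hpm (t n)).aestronglyMeasurable)
      (hq0int.add hpint) (fun n => Eventually.of_forall fun z => ?_)
      (Eventually.of_forall fun z => ?_)
    · rw [Real.norm_eq_abs, abs_of_nonneg (gammaPath_nonneg q0 p hq0nn hpnn _ z)]
      exact gammaPath_le hq0nn hpnn (htpos n).le (htle n) z
    · rcases eq_or_ne (q0 z) 0 with hq | hq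
      · simp only [gammaPath, hq, if_pos, hgdef]
        split <;> simp [hq]
      · rcases eq_or_ne (p z) 0 with hp | hp
        · have : ∀ n, gammaPath q0 p (t n) z = 0 := fun n => by
            simp [gammaPath, hq, hp, Real.zero_rpow (htpos n).ne']
          simp only [this, hgdef]
          simp [hp]
        · have hcont : ContinuousAt (fun s : ℝ => q0 z ^ (1 - s) * p z ^ s) 0 :=
            ((Real.continuousAt_const_rpow hq).comp
              ((continuousAt_const (y := (1:ℝ))).sub continuousAt_id)).mul
              (Real.continuousAt_const_rpow hp)
          have := hcont.tendsto.comp ht0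
          simp only [Function.comp_def, sub_zero, Real.rpow_one, Real.rpow_zero, mul_one] at this
          have hgz : g z = q0 z := by simp [hgdef, hp]
          rw [hgz]
          refine this.congr fun n => ?_
          simp [gammaPath, hq]
  have hint : ∫ z, g z ∂μ = 1 := tendsto_nhds_unique hZtend2 hZtend1
  have hzero : ∀ᵐ z ∂μ, q0 z - g z = 0 := by
    have hnn : 0 ≤ fun z => q0 z - g z := fun z => sub_nonneg.2 (hgle z).2
    have hi : Integrable (fun z => q0 z - g z) μ := hq0int.sub hgint
    have hz0 : ∫ z, (q0 z - g z) ∂μ = 0 := by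
      rw [integral_sub hq0int hgint, hq0one, hint, sub_self]
    have := (integral_eq_zero_iff_of_nonneg hnn hi).1 hz0
    filter_upwards [this] with z hz using hz
  filter_upwards [hzero] with z hz hq hp
  rw [hgdef] at hz
  simp only [hp, if_pos] at hz
  exact hq (by linarith)

/-- Taylor with Lagrange remainder at order one, via Cauchy's mean value theorem. -/
lemma lagrange_aux (L D L'' : ℝ → ℝ)
    (hL' : ∀ η ∈ Set.Icc (0:ℝ) 1, HasDerivWithinAt L (D η) (Set.Icc 0 1) η)
    (hD : ∀ η ∈ Set.Icc (0:ℝ) 1, HasDerivWithinAt D (L'' η) (Set.Icc 0 1) η)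
    {β β' : ℝ} (h0 : 0 ≤ β) (hlt : β < β') (h1 : β' ≤ 1) :
    ∃ ξ ∈ Set.Icc β β', L β' - L β - (β' - β) * D β = 1/2 * (β' - β)^2 * L'' ξ := by
  have hsub : Set.Icc β β' ⊆ Set.Icc (0:ℝ) 1 := Set.Icc_subset_Icc h0 h1
  have hnhds : ∀ x ∈ Set.Ioo β β', Set.Icc (0:ℝ) 1 ∈ 𝓝 x := fun x hx =>
    Icc_mem_nhds (lt_of_le_of_lt h0 hx.1) (lt_of_lt_of_le hx.2 h1)
  have hLc : ContinuousOn L (Set.Icc β β') := fun x hx =>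
    ((hL' x (hsub hx)).continuousWithinAt).mono hsub
  have hDc : ContinuousOn D (Set.Icc β β') := fun x hx =>
    ((hD x (hsub hx)).continuousWithinAt).mono hsub
  have hf' : ∀ x ∈ Set.Ioo β β',
      HasDerivAt (fun t => L β' - L t - (β' - t) * D t) (-((β' - x) * L'' x)) x := by
    intro x hx
    have hLx : HasDerivAt L (D x) x :=
      (hL' x (hsub (Set.Ioo_subset_Icc_self hx))).hasDerivAt (hnhds x hx)
    have hDx : HasDerivAt D (L'' x) x :=
      (hD x (hsub (Set.Ioo_subset_Icc_self hx))).hasDerivAt (hnhds x hx)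
    have h1' : HasDerivAt (fun t : ℝ => β' - t) (-1) x := by
      simpa using (hasDerivAt_id x).const_sub β'
    have : HasDerivAt (fun t => L β' - L t - (β' - t) * D t)
        (-D x - (-1 * D x + (β' - x) * L'' x)) x := (hLx.const_sub (L β')).sub (h1'.mul hDx)
    convert this using 1; ring
  have hg' : ∀ x ∈ Set.Ioo β β',
      HasDerivAt (fun t : ℝ => (β' - t)^2) (-2 * (β' - x)) x := by
    intro x hx
    have h1' : HasDerivAt (fun t : ℝ => β' - t) (-1) x := by
      simpa using (hasDerivAt_id x).const_sub β'
    have : HasDerivAt (fun t : ℝ => (β' - t)^2) (((2:ℕ):ℝ) * (β' - x) ^ 1 * -1) x := h1'.pow 2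
    convert this using 1; ring
  have hfc : ContinuousOn (fun t => L β' - L t - (β' - t) * D t) (Set.Icc β β') :=
    (continuousOn_const.sub hLc).sub ((continuousOn_const.sub continuousOn_id).mul hDc)
  have hgc : ContinuousOn (fun t : ℝ => (β' - t)^2) (Set.Icc β β') := by fun_prop
  obtain ⟨c, hc, hkey⟩ := exists_ratio_hasDerivAt_eq_ratio_slope
    (fun t => L β' - L t - (β' - t) * D t) (fun x => -((β' - x) * L'' x)) hlt hfc hf'
    (fun t : ℝ => (β' - t)^2) (fun x => -2 * (β' - x)) hgc hg'
  refine ⟨c, Set.Ioo_subset_Icc_self hc, ?_⟩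
  have hne : β' - c ≠ 0 := ne_of_gt (sub_pos.2 hc.2)
  have h1' : ((β' - β)^2 * L'' c) * (β' - c)
      = (2 * (L β' - L β - (β' - β) * D β)) * (β' - c) := by linear_combination hkey
  have h2' := mul_right_cancel₀ hne h1'
  linarith

/-- Under integrability and `C²` regularity of `L = log Z`, each KL divergence
between two annealing distributions is a Lagrange remainder: for `0 ≤ β < β′ ≤ 1` there is
`ξ ∈ [β, β′]` with `D_KL(π_β ‖ π_{β′}) = (1/2)(β′ − β)² L″(ξ)`. -/
theorem consecutive_kl_lagrange_form
    (μ : Measure X) [SigmaFinite μ] (q0 p : X → ℝ)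
    (hq0m : Measurable q0) (hq0nn : ∀ z, 0 ≤ q0 z) (hq0one : ∫ z, q0 z ∂μ = 1)
    (hpm : Measurable p) (hpnn : ∀ z, 0 ≤ p z) (hpone : ∫ z, p z ∂μ = 1)
    (hsupp : ∀ᵐ z ∂μ, 0 < p z → 0 < q0 z)
    (hZ : ∀ η ∈ Set.Icc (0 : ℝ) 1,
      Integrable (gammaPath q0 p η) μ ∧ 0 < Zpath μ q0 p η)
    (hπint : ∀ β ∈ Set.Icc (0 : ℝ) 1,
      Integrable (fun z => piPath μ q0 p β z * (|ell q0 p z| + |Real.log (q0 z)|)) μ)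
    (L'' : ℝ → ℝ)
    (hL' : ∀ η ∈ Set.Icc (0 : ℝ) 1,
      HasDerivWithinAt (fun t => Real.log (Zpath μ q0 p t))
        (∫ z, piPath μ q0 p η z * ell q0 p z ∂μ) (Set.Icc 0 1) η)
    (hL'' : ∀ η ∈ Set.Icc (0 : ℝ) 1,
      HasDerivWithinAt (fun t => ∫ z, piPath μ q0 p t z * ell q0 p z ∂μ)
        (L'' η) (Set.Icc 0 1) η)
    (hL''cont : ContinuousOn L'' (Set.Icc 0 1)) :
    (∀ β β' : ℝ, 0 ≤ β → β < β' → β' ≤ 1 →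
      ∃ ξ ∈ Set.Icc β β',
        KLdiv μ (piPath μ q0 p β) (piPath μ q0 p β')
          = 1 / 2 * (β' - β) ^ 2 * L'' ξ) ∧
    (∀ K : ℕ, 1 ≤ K → ∀ k ∈ Finset.Icc 1 K,
      ∃ ξ ∈ Set.Icc (((k : ℝ) - 1) / K) ((k : ℝ) / K),
        KLdiv μ (piPath μ q0 p (((k : ℝ) - 1) / K)) (piPath μ q0 p ((k : ℝ) / K))
          = 1 / (2 * (K : ℝ) ^ 2) * L'' ξ) := by
  -- a.e. the supports of q0 and p coincide
  have hnull : ∀ᵐ z ∂μ, q0 z ≠ 0 → p z ≠ 0 :=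
    ae_support_subset μ q0 p hq0m hq0nn hq0one hpm hpnn hsupp hZ
      ((hL' 0 ⟨le_rfl, zero_le_one⟩).continuousWithinAt)
  have hboth : ∀ᵐ z ∂μ, (q0 z = 0 ∧ p z = 0) ∨ (0 < q0 z ∧ 0 < p z) := by
    filter_upwards [hsupp, hnull] with z h1 h2
    rcases eq_or_lt_of_le (hq0nn z) with hq | hq
    · left
      refine ⟨hq.symm, ?_⟩
      by_contra hp
      exact absurd hq.symm (h1 ((hpnn z).lt_of_ne' hp)).ne'
    · right
      exact ⟨hq, (hpnn z).lt_of_ne' (h2 hq.ne')⟩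
  have main : ∀ β β' : ℝ, 0 ≤ β → β < β' → β' ≤ 1 →
      ∃ ξ ∈ Set.Icc β β',
        KLdiv μ (piPath μ q0 p β) (piPath μ q0 p β')
          = 1 / 2 * (β' - β) ^ 2 * L'' ξ := by
    intro β β' h0 hlt h1
    have hβmem : β ∈ Set.Icc (0:ℝ) 1 := ⟨h0, le_trans hlt.le h1⟩
    have hβ'mem : β' ∈ Set.Icc (0:ℝ) 1 := ⟨le_trans h0 hlt.le, h1⟩
    have hZbpos : 0 < Zpath μ q0 p β := (hZ β hβmem).2
    have hZb'pos : 0 < Zpath μ q0 p β' := (hZ β' hβ'mem).2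
    -- pointwise identity
    have heq : ∀ᵐ z ∂μ, piPath μ q0 p β z * Real.log (piPath μ q0 p β z / piPath μ q0 p β' z)
        = (β - β') * (piPath μ q0 p β z * ell q0 p z)
          + (Real.log (Zpath μ q0 p β') - Real.log (Zpath μ q0 p β)) * piPath μ q0 p β z := by
      filter_upwards [hboth] with z hz
      rcases hz with ⟨hq, hp⟩ | ⟨hq, hp⟩
      · simp [piPath, gammaPath, hq]
      · have hγβ : gammaPath q0 p β z = q0 z ^ (1-β) * p z ^ β := if_neg hq.ne'
        have hγβ' : gammaPath q0 p β' z = q0 z ^ (1-β') * p z ^ β' := if_neg hq.ne'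
        have hγβpos : 0 < gammaPath q0 p β z := by rw [hγβ]; positivity
        have hγβ'pos : 0 < gammaPath q0 p β' z := by rw [hγβ']; positivity
        have hπβpos : 0 < piPath μ q0 p β z := div_pos hγβpos hZbpos
        have hπβ'pos : 0 < piPath μ q0 p β' z := div_pos hγβ'pos hZb'pos
        have hlog : Real.log (piPath μ q0 p β z / piPath μ q0 p β' z)
            = ((1-β) * Real.log (q0 z) + β * Real.log (p z) - Real.log (Zpath μ q0 p β))
              - ((1-β') * Real.log (q0 z) + β' * Real.log (p z)
                - Real.log (Zpath μ q0 p β')) := by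
          rw [Real.log_div hπβpos.ne' hπβ'pos.ne']
          unfold piPath
          rw [Real.log_div hγβpos.ne' hZbpos.ne', Real.log_div hγβ'pos.ne' hZb'pos.ne',
            hγβ, hγβ',
            Real.log_mul (Real.rpow_pos_of_pos hq _).ne' (Real.rpow_pos_of_pos hp _).ne',
            Real.log_mul (Real.rpow_pos_of_pos hq _).ne' (Real.rpow_pos_of_pos hp _).ne',
            Real.log_rpow hq, Real.log_rpow hp, Real.log_rpow hq, Real.log_rpow hp]
        rw [hlog]
        simp only [ell]
        rw [Real.log_div hp.ne' hq.ne']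
        ring
    -- integrability facts
    have hπnn : ∀ z, 0 ≤ piPath μ q0 p β z := fun z =>
      div_nonneg (gammaPath_nonneg q0 p hq0nn hpnn β z) hZbpos.le
    have hellm : Measurable (ell q0 p) := (hpm.div hq0m).log
    have hπm : Measurable (piPath μ q0 p β) := (gammaPath_measurable hq0m hpm β).div_const _
    have hπℓint : Integrable (fun z => piPath μ q0 p β z * ell q0 p z) μ := by
      refine (hπint β hβmem).mono' ((hπm.mul hellm).aestronglyMeasurable) ?_
      refine Eventually.of_forall fun z => ?_
      rw [Real.norm_eq_abs, abs_mul, abs_of_nonneg (hπnn z)]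
      exact mul_le_mul_of_nonneg_left (le_add_of_nonneg_right (abs_nonneg _)) (hπnn z)
    have hπintg : Integrable (piPath μ q0 p β) μ := (hZ β hβmem).1.div_const _
    have hπ1 : ∫ z, piPath μ q0 p β z ∂μ = 1 := by
      unfold piPath
      rw [integral_div]
      exact div_self hZbpos.ne'
    -- the KL identity
    have hKL : KLdiv μ (piPath μ q0 p β) (piPath μ q0 p β')
        = (β - β') * (∫ z, piPath μ q0 p β z * ell q0 p z ∂μ)
          + (Real.log (Zpath μ q0 p β') - Real.log (Zpath μ q0 p β)) := by
      unfold KLdiv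
      rw [integral_congr_ae heq, integral_add (hπℓint.const_mul _) (hπintg.const_mul _),
        integral_const_mul, integral_const_mul, hπ1, mul_one]
    obtain ⟨ξ, hξ, hR⟩ := lagrange_aux (fun t => Real.log (Zpath μ q0 p t))
      (fun η => ∫ z, piPath μ q0 p η z * ell q0 p z ∂μ) L'' hL' hL'' h0 hlt h1
    exact ⟨ξ, hξ, by linear_combination hKL + hR⟩
  refine ⟨main, ?_⟩
  intro K hK k hk
  rw [Finset.mem_Icc] at hk
  have hKpos : (0:ℝ) < K := by exact_mod_cast hK
  have hk1 : (1:ℝ) ≤ (k:ℝ) := by exact_mod_cast hk.1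
  have hkK : (k:ℝ) ≤ (K:ℝ) := by exact_mod_cast hk.2
  have h0 : 0 ≤ ((k:ℝ) - 1) / K := div_nonneg (by linarith) hKpos.le
  have hlt : ((k:ℝ) - 1) / K < (k:ℝ) / K := by
    rw [div_lt_div_iff₀ hKpos hKpos]
    nlinarith
  have h1 : (k:ℝ) / K ≤ 1 := by rw [div_le_one hKpos]; exact hkK
  obtain ⟨ξ, hξ, h⟩ := main _ _ h0 hlt h1
  refine ⟨ξ, hξ, ?_⟩
  rw [h]
  congr 1
  field_simp
  ring
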